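/- Let C be a model category in which weak equivalences are closed under filtered colimits of cofibrations, and let λ be an ordinal. Given two λ-sequences X : λ → C and Y : λ → C of cofibrations between cofibrant objects, and a natural transformation φ : X → Y which is a levelwise weak equivalence, the induced map on colimits colim X → colim Y is a weak equivalence. -/

import Mathlib

open CategoryTheory CategoryTheory.Limits

universe v u

/-- A class of morphisms is closed under retracts if whenever `f` is a retract of
`g` (in the arrow category) and `g` lies in the class, so does `f`. -/
def RetractClosed {C : Type u} [Category.{v} C] (P : MorphismProperty C) : Prop :=
  ∀ {X Y X' Y' : C} (f : X ⟶ Y) (g : X' ⟶ Y')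
    (iX : X ⟶ X') (rX : X' ⟶ X) (iY : Y ⟶ Y') (rY : Y' ⟶ Y),
    iX ≫ rX = 𝟙 X → iY ≫ rY = 𝟙 Y → iX ≫ g = f ≫ iY → g ≫ rY = rX ≫ f →
    P g → P f

/-- A (Quillen) model structure on a category `C`: classes of weak equivalences,
cofibrations and fibrations satisfying the two-out-of-three, retract, lifting and
factorization axioms. -/
structure ModelStruct (C : Type u) [Category.{v} C] where
  W : MorphismProperty C
  Cof : MorphismProperty C
  Fib : MorphismProperty C
  w_id : ∀ X : C, W (𝟙 X)
  cof_id : ∀ X : C, Cof (𝟙 X)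
  fib_id : ∀ X : C, Fib (𝟙 X)
  w_comp : ∀ {X Y Z : C} (f : X ⟶ Y) (g : Y ⟶ Z), W f → W g → W (f ≫ g)
  w_cancel_left : ∀ {X Y Z : C} (f : X ⟶ Y) (g : Y ⟶ Z), W f → W (f ≫ g) → W g
  w_cancel_right : ∀ {X Y Z : C} (f : X ⟶ Y) (g : Y ⟶ Z), W g → W (f ≫ g) → W f
  w_retract : RetractClosed W
  cof_retract : RetractClosed Cof
  fib_retract : RetractClosed Fib
  lift_cof_trivFib : ∀ {A B X Y : C} (i : A ⟶ B) (p : X ⟶ Y),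
    Cof i → Fib p → W p → HasLiftingProperty i p
  lift_trivCof_fib : ∀ {A B X Y : C} (i : A ⟶ B) (p : X ⟶ Y),
    Cof i → W i → Fib p → HasLiftingProperty i p
  fact₁ : ∀ {X Y : C} (f : X ⟶ Y), ∃ (Z : C) (i : X ⟶ Z) (p : Z ⟶ Y),
    Cof i ∧ W p ∧ Fib p ∧ i ≫ p = f
  fact₂ : ∀ {X Y : C} (f : X ⟶ Y), ∃ (Z : C) (i : X ⟶ Z) (p : Z ⟶ Y),
    Cof i ∧ W i ∧ Fib p ∧ i ≫ p = f

namespace ModelStruct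

variable {C : Type u} [Category.{v} C] (M : ModelStruct C)

/-- An object is fibrant if the map to the terminal object is a fibration. -/
def Fibrant [HasTerminal C] (X : C) : Prop := M.Fib (terminal.from X)

/-- An object is cofibrant if the map from the initial object is a cofibration. -/
def Cofibrant [HasInitial C] (X : C) : Prop := M.Cof (initial.to X)

end ModelStruct

section TransfiniteSequences

variable {C : Type u} [Category.{v} C]

/-- The cocone over the restriction of a sequence `X : J ⥤ C` to the objects
below `j`, with apex `X.obj j`.  A `λ`-sequence is required to be a colimit
cocone at every limit point `j`. -/
@[simps]
def seqCocone {J : Type v} [Preorder J] (X : J ⥤ C) (j : J) :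
    Cocone ((Monotone.functor (f := (Subtype.val : Set.Iio j → J))
      (fun _ _ h => h)) ⋙ X) where
  pt := X.obj j
  ι :=
    { app := fun x => X.map (homOfLE x.2.le)
      naturality := fun x y φ => by
        dsimp
        rw [Category.comp_id, ← X.map_comp]
        exact congrArg X.map (Subsingleton.elim _ _) }


/-- A map with the left lifting property against all trivial fibrations is a
cofibration (retract argument). -/
theorem ModelStruct.cof_of_llp {C : Type u} [Category.{v} C] (M : ModelStruct C)
    {X Y : C} (f : X ⟶ Y)
    (h : ∀ {A B : C} (p : A ⟶ B), M.Fib p → M.W p → HasLiftingProperty f p) :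
    M.Cof f := by
  obtain ⟨Z, i', p, hi, hw, hp, hfac⟩ := M.fact₁ f
  haveI := h p hp hw
  have sq : CommSq i' f p (𝟙 Y) := ⟨by rw [Category.comp_id, hfac]⟩
  exact M.cof_retract f i' (𝟙 X) (𝟙 X) sq.lift p (Category.id_comp _) sq.fac_right
    (by rw [Category.id_comp, sq.fac_left]) (by rw [hfac, Category.id_comp]) hi

/-- Transfinite lifting: in a `λ`-sequence whose successor maps have the left
lifting property against `p`, every map of the sequence has the left lifting
property against `p`. -/
theorem seq_map_llp {C : Type u} [Category.{v} C] {J : Type v} [LinearOrder J] [SuccOrder J] [WellFoundedLT J]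
    (X : J ⥤ C) {A B : C} (p : A ⟶ B)
    (hsucc : ∀ j : J, HasLiftingProperty (X.map (homOfLE (Order.le_succ j))) p)
    (hsmooth : ∀ j : J, Order.IsSuccLimit j → Nonempty (IsColimit (seqCocone X j)))
    {i j : J} (hij : i ≤ j) :
    HasLiftingProperty (X.map (homOfLE hij)) p := by
  constructor
  intro f g sq
  have key : ∀ {a b c' : J} (e1 : a ⟶ b) (e2 : b ⟶ c') (e3 : a ⟶ c'),
      X.map e1 ≫ X.map e2 = X.map e3 := by
    intro a b c' e1 e2 e3
    rw [← X.map_comp]; exact congrArg X.map (Subsingleton.elim _ _)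
  have keyid : ∀ {a : J} (e : a ⟶ a) {T : C} (t : X.obj a ⟶ T),
      X.map e ≫ t = t := by
    intro a e T t
    rw [show e = 𝟙 a from Subsingleton.elim _ _, X.map_id, Category.id_comp]
  have keypf : ∀ {a b : J} (e1 e2 : a ⟶ b), X.map e1 = X.map e2 :=
    fun e1 e2 => congrArg X.map (Subsingleton.elim _ _)
  have keycomp : ∀ {a b : J} (e1 e2 : a ⟶ b) {T : C} (t : X.obj b ⟶ T),
      X.map e1 ≫ t = X.map e2 ≫ t := by
    intro a b e1 e2 T t; rw [Subsingleton.elim e1 e2]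
  -- The poset of partial lifts
  let P := {q : Σ k : J, X.obj k ⟶ A //
    ∃ (h1 : i ≤ q.1) (h2 : q.1 ≤ j),
      X.map (homOfLE h1) ≫ q.2 = f ∧ q.2 ≫ p = X.map (homOfLE h2) ≫ g}
  letI : Preorder P :=
    { le := fun q q' => ∃ h : q.1.1 ≤ q'.1.1, X.map (homOfLE h) ≫ q'.1.2 = q.1.2
      le_refl := fun q => ⟨le_refl _, keyid _ _⟩
      le_trans := fun q q' q'' h h' => ⟨h.1.trans h'.1, by
        obtain ⟨h1, e1⟩ := h; obtain ⟨h2, e2⟩ := h'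
        rw [← key (homOfLE h1) (homOfLE h2) (homOfLE (h1.trans h2)),
          Category.assoc, e2, e1]⟩ }
  -- the base partial lift
  have hbase : ∃ (h1 : i ≤ i) (h2 : i ≤ j),
      X.map (homOfLE h1) ≫ f = f ∧ f ≫ p = X.map (homOfLE h2) ≫ g :=
    ⟨le_refl i, hij, keyid _ _, sq.w⟩
  have hchains : ∀ c : Set P, IsChain (· ≤ ·) c → BddAbove c := by
    intro c hc
    rcases Set.eq_empty_or_nonempty c with rfl | ⟨q₀, hq₀⟩
    · exact ⟨⟨⟨i, f⟩, hbase⟩, fun q hq => absurd hq (Set.notMem_empty q)⟩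
    -- compatibility of the chain
    have hW : ∀ q ∈ c, ∀ q' ∈ c, ∀ h : (q : P).1.1 ≤ (q' : P).1.1,
        X.map (homOfLE h) ≫ (q' : P).1.2 = (q : P).1.2 := by
      rintro ⟨⟨k, l⟩, hk⟩ hq ⟨⟨k', l'⟩, hk'⟩ hq' h
      dsimp only at h ⊢
      rcases lt_or_eq_of_le h with hlt | heq
      · have hne : (⟨⟨k, l⟩, hk⟩ : P) ≠ ⟨⟨k', l'⟩, hk'⟩ := by
          intro he
          exact absurd (congrArg (fun q : P => q.1.1) he) (ne_of_lt hlt)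
        rcases hc hq hq' hne with ⟨h', e'⟩ | ⟨h', e'⟩
        · rw [keypf (homOfLE h) (homOfLE h')]; exact e'
        · exact absurd h' (not_le.2 hlt)
      · subst heq
        have hll : l = l' := by
          by_cases he : (⟨⟨k, l⟩, hk⟩ : P) = ⟨⟨k, l'⟩, hk'⟩
          · exact eq_of_heq (Sigma.mk.inj_iff.1 (Subtype.ext_iff.1 he)).2
          · rcases hc hq hq' he with ⟨h', e'⟩ | ⟨h', e'⟩
            · dsimp only at e'; rw [keyid] at e'; exact e'.symm
            · dsimp only at e'; rw [keyid] at e'; exact e'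
        subst hll
        exact keyid _ _
    -- the least upper bound of the indices of the chain
    set S : Set J := {k : J | ∀ q ∈ c, (q : P).1.1 ≤ k} with hS
    have hjS : j ∈ S := fun q hq => q.2.choose_spec.choose
    have hSne : S.Nonempty := ⟨j, hjS⟩
    set k' : J := (wellFounded_lt (α := J)).min S hSne with hk'
    have hk'S : k' ∈ S := (wellFounded_lt (α := J)).min_mem S hSne
    have hk'j : k' ≤ j := not_lt.1 ((wellFounded_lt (α := J)).not_lt_min S hjS)
    by_cases hatt : ∃ q ∈ c, (q : P).1.1 = k'
    · obtain ⟨q, hq, hqk⟩ := hatt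
      refine ⟨q, fun q' hq' => ⟨hqk ▸ hk'S q' hq', hW q' hq' q hq _⟩⟩
    · -- k' is a limit ordinal
      push_neg at hatt
      have hlt : ∀ q ∈ c, (q : P).1.1 < k' := fun q hq =>
        lt_of_le_of_ne (hk'S q hq) (hatt q hq)
      have hnotS : ∀ a : J, a < k' → ∃ q ∈ c, a < (q : P).1.1 := by
        intro a ha
        have haS : a ∉ S := fun haS =>
          (wellFounded_lt (α := J)).not_lt_min S haS ha
        rw [hS] at haS
        simp only [Set.mem_setOf_eq, not_forall, not_le] at haS
        obtain ⟨q, hq, hqa⟩ := haS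
        exact ⟨q, hq, hqa⟩
      have hlim : Order.IsSuccLimit k' := by
        constructor
        · intro hmin
          exact absurd (hmin (le_of_lt (hlt q₀ hq₀))) (not_le.2 (hlt q₀ hq₀))
        · intro a ha
          obtain ⟨q, hq, hqa⟩ := hnotS a ha.1
          exact ha.2 hqa (hlt q hq)
      obtain ⟨hcolim⟩ := hsmooth k' hlim
      -- for every index below k', choose a chain element above it
      have hex : ∀ x : Set.Iio k', ∃ q ∈ c, x.1 < (q : P).1.1 :=
        fun x => hnotS x.1 x.2
      choose qc hqc hqcx using hex
      -- well-definedness of the induced maps to A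
      have hwd : ∀ (x : J) (q q' : P), q ∈ c → q' ∈ c →
          ∀ (h : x ≤ q.1.1) (h' : x ≤ q'.1.1),
          X.map (homOfLE h) ≫ q.1.2 = X.map (homOfLE h') ≫ q'.1.2 := by
        intro x q q' hq hq' h h'
        rcases le_total q.1.1 q'.1.1 with hle | hle
        · rw [← hW q hq q' hq' hle, ← Category.assoc,
            key (homOfLE h) (homOfLE hle) (homOfLE h')]
        · rw [← hW q' hq' q hq hle, ← Category.assoc,
            key (homOfLE h') (homOfLE hle) (homOfLE h)]
      -- the cocone on A induced by the chain
      let D : Cocone ((Monotone.functor (f := (Subtype.val : Set.Iio k' → J))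
          (fun _ _ h => h)) ⋙ X) :=
        { pt := A
          ι :=
            { app := fun x => X.map (homOfLE (hqcx x).le) ≫ (qc x).1.2
              naturality := fun x y φ => by
                dsimp
                rw [Category.comp_id, ← Category.assoc]
                erw [key _ (homOfLE (hqcx y).le)
                    (homOfLE ((Subtype.coe_le_coe.2 (leOfHom φ)).trans (hqcx y).le))]
                exact hwd x.1 (qc y) (qc x) (hqc y) (hqc x) _ _ } }
      have hi : i < k' := lt_of_le_of_lt q₀.2.choose (hlt q₀ hq₀)
      refine ⟨⟨⟨k', hcolim.desc D⟩, hi.le, hk'j, ?_, ?_⟩, ?_⟩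
      · -- restricts to f
        have hfac := hcolim.fac D ⟨i, hi⟩
        dsimp [seqCocone, D] at hfac
        rw [keypf (homOfLE hi.le) (homOfLE (le_of_lt hi))] at *
        erw [hfac]
        have hq₀f : X.map (homOfLE q₀.2.choose) ≫ q₀.1.2 = f :=
          q₀.2.choose_spec.choose_spec.1
        erw [hwd i (qc ⟨i, hi⟩) q₀ (hqc _) hq₀ (hqcx ⟨i, hi⟩).le q₀.2.choose, hq₀f]
      · -- compatible with g
        apply hcolim.hom_ext
        intro x
        have hfac := hcolim.fac D x
        dsimp [seqCocone, D] at hfac ⊢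
        rw [← Category.assoc, hfac, Category.assoc,
          (qc x).2.choose_spec.choose_spec.2, ← Category.assoc]
        erw [key (homOfLE (hqcx x).le) (homOfLE (qc x).2.choose_spec.choose)
            (homOfLE (x.2.le.trans hk'j)),
          ← Category.assoc, key (homOfLE x.2.le) (homOfLE hk'j)
            (homOfLE (x.2.le.trans hk'j))]
      · -- upper bound property
        intro q hq
        refine ⟨(hlt q hq).le, ?_⟩
        have hfac := hcolim.fac D ⟨q.1.1, hlt q hq⟩
        dsimp [seqCocone, D] at hfac
        rw [keypf (homOfLE (hlt q hq).le) (homOfLE (le_of_lt (hlt q hq)))]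
        erw [hfac]
        have hwq := hwd q.1.1 (qc ⟨q.1.1, hlt q hq⟩) q (hqc _) hq
          (hqcx ⟨q.1.1, hlt q hq⟩).le le_rfl
        rw [keyid (homOfLE le_rfl)] at hwq
        exact hwq
  -- the maximal element is a total lift
  obtain ⟨m, hm⟩ := zorn_le (α := P) hchains
  obtain ⟨⟨k, l⟩, hk1, hk2, hkf, hkg⟩ := m
  dsimp only at hk1 hk2 hkf hkg
  have hkj : k = j := by
    by_contra hne
    have hlt : k < j := lt_of_le_of_ne hk2 hne
    have hks : k < Order.succ k := Order.lt_succ_of_not_isMax (not_isMax_of_lt hlt)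
    have hsj : Order.succ k ≤ j := Order.succ_le_of_lt hlt
    haveI := hsucc k
    have sq' : CommSq l (X.map (homOfLE (Order.le_succ k))) p
        (X.map (homOfLE hsj) ≫ g) :=
      ⟨by rw [hkg, ← Category.assoc,
        key (homOfLE (Order.le_succ k)) (homOfLE hsj) (homOfLE hk2)]⟩
    have hnew : ∃ (h1 : i ≤ Order.succ k) (h2 : Order.succ k ≤ j),
        X.map (homOfLE h1) ≫ sq'.lift = f ∧
          sq'.lift ≫ p = X.map (homOfLE h2) ≫ g :=
      ⟨hk1.trans hks.le, hsj, by
        rw [← key (homOfLE hk1) (homOfLE (Order.le_succ k))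
          (homOfLE (hk1.trans hks.le)), Category.assoc, sq'.fac_left, hkf],
        sq'.fac_right⟩
    have hle : (⟨⟨k, l⟩, hk1, hk2, hkf, hkg⟩ : P) ≤ ⟨⟨Order.succ k, sq'.lift⟩, hnew⟩ :=
      ⟨hks.le, (keycomp (homOfLE hks.le) (homOfLE (Order.le_succ k))
        sq'.lift).trans sq'.fac_left⟩
    obtain ⟨h', -⟩ := hm hle
    exact absurd h' (not_le.2 hks)
  subst hkj
  exact ⟨⟨⟨l, (keycomp (homOfLE hij) (homOfLE hk1) l).trans hkf,
    hkg.trans (keyid _ _)⟩⟩⟩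


/-- **Transfinite compositions of weak equivalences (Hovey 5.1.5).**
Let `C` be a model category in which weak equivalences are closed under filtered
colimits of cofibrations.  Let `J` be a well-ordered type (an ordinal `λ`), and
let `X, Y : J ⥤ C` be `λ`-sequences of cofibrations between cofibrant objects
(each successor map is a cofibration, and `X`, `Y` are colimit-preserving at
limit points).  If `φ : X ⟶ Y` is a levelwise weak equivalence, then the induced
map `colim X ⟶ colim Y` is a weak equivalence. -/
theorem transfinite_composition_weak_equivalence
    [HasColimits C] [HasInitial C] (M : ModelStruct C)
    (hfiltered : ∀ (K : Type v) [SmallCategory K] [IsFiltered K]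
      (X Y : K ⥤ C) (φ : X ⟶ Y),
      (∀ {k k' : K} (h : k ⟶ k'), M.Cof (X.map h) ∧ M.Cof (Y.map h)) →
      (∀ k : K, M.W (φ.app k)) →
      M.W (colim.map φ))
    (J : Type v) [LinearOrder J] [OrderBot J] [SuccOrder J] [WellFoundedLT J]
    (X Y : J ⥤ C)
    (hXsucc : ∀ j : J, M.Cof (X.map (homOfLE (Order.le_succ j))))
    (hYsucc : ∀ j : J, M.Cof (Y.map (homOfLE (Order.le_succ j))))
    (hXcofibrant : ∀ j : J, M.Cofibrant (X.obj j))
    (hYcofibrant : ∀ j : J, M.Cofibrant (Y.obj j))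
    (hXsmooth : ∀ j : J, Order.IsSuccLimit j → Nonempty (IsColimit (seqCocone X j)))
    (hYsmooth : ∀ j : J, Order.IsSuccLimit j → Nonempty (IsColimit (seqCocone Y j)))
    (φ : X ⟶ Y) (hφ : ∀ j : J, M.W (φ.app j)) :
    M.W (colim.map φ) := by
  have cofseq : ∀ (Z : J ⥤ C),
      (∀ j : J, M.Cof (Z.map (homOfLE (Order.le_succ j)))) →
      (∀ j : J, Order.IsSuccLimit j → Nonempty (IsColimit (seqCocone Z j))) →
      ∀ {k k' : J} (h : k ⟶ k'), M.Cof (Z.map h) := by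
    intro Z hsucc hsmooth k k' h
    rw [show Z.map h = Z.map (homOfLE (leOfHom h)) from
      congrArg Z.map (Subsingleton.elim _ _)]
    exact M.cof_of_llp _ (fun p hfib hw =>
      seq_map_llp Z p (fun j => M.lift_cof_trivFib _ p (hsucc j) hfib hw)
        hsmooth (leOfHom h))
  haveI : Nonempty J := ⟨⊥⟩
  exact hfiltered J X Y φ
    (fun h => ⟨cofseq X hXsucc hXsmooth h, cofseq Y hYsucc hYsmooth h⟩) hφ


end TransfiniteSequences
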